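/- Let p, q ∈ (0,1), φ ∈ [0,2π), μ₁ = √(pq), μ₂ = √((1−p)(1−q)), Δp = 2p−1, Δq = 2q−1, and define a_n = |(μ₁ + e^{−iφ}μ₂)^n + (μ₁ − e^{−iφ}μ₂)^n| / √((1+Δp^n)(1+Δq^n)) and b_n = |(μ₁ + e^{−iφ}μ₂)^n − (μ₁ − e^{−iφ}μ₂)^n| / √((1−Δp^n)(1−Δq^n)). If either p ≠ q, or (p = q and φ ∉ {0, π}), then lim_{n→∞} a_n = lim_{n→∞} b_n = 0. -/

import Mathlib

open Filter

noncomputable section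

/-- a_n = |(μ₁+e^{−iφ}μ₂)^n + (μ₁−e^{−iφ}μ₂)^n| / √((1+Δp^n)(1+Δq^n)), the modulus of
the overlap ⟨0_q|0_p⟩ of the normalized even-parity components. -/
def aSeq (p q φ : ℝ) (n : ℕ) : ℝ :=
  ‖((Real.sqrt (p * q) : ℂ) +
      Complex.exp (-(Complex.I * φ)) * (Real.sqrt ((1 - p) * (1 - q)) : ℂ)) ^ n +
    ((Real.sqrt (p * q) : ℂ) -
      Complex.exp (-(Complex.I * φ)) * (Real.sqrt ((1 - p) * (1 - q)) : ℂ)) ^ n‖ /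
  Real.sqrt ((1 + (2 * p - 1) ^ n) * (1 + (2 * q - 1) ^ n))

/-- b_n = |(μ₁+e^{−iφ}μ₂)^n − (μ₁−e^{−iφ}μ₂)^n| / √((1−Δp^n)(1−Δq^n)), the modulus of
the overlap ⟨1_q|1_p⟩ of the normalized odd-parity components. -/
def bSeq (p q φ : ℝ) (n : ℕ) : ℝ :=
  ‖((Real.sqrt (p * q) : ℂ) +
      Complex.exp (-(Complex.I * φ)) * (Real.sqrt ((1 - p) * (1 - q)) : ℂ)) ^ n -
    ((Real.sqrt (p * q) : ℂ) -
      Complex.exp (-(Complex.I * φ)) * (Real.sqrt ((1 - p) * (1 - q)) : ℂ)) ^ n‖ /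
  Real.sqrt ((1 - (2 * p - 1) ^ n) * (1 - (2 * q - 1) ^ n))

/-- squeeze lemma: nonneg `N n ≤ r^n + s^n` over denominator `d n ≥ c > 0` tends to 0. -/
lemma aux_tendsto (r s : ℝ) (hr0 : 0 ≤ r) (hr : r < 1) (hs0 : 0 ≤ s) (hs : s < 1)
    (N d : ℕ → ℝ) (hN0 : ∀ n, 0 ≤ N n) (hN : ∀ n, N n ≤ r ^ n + s ^ n)
    (c : ℝ) (hc : 0 < c) (hd0 : ∀ n, 0 ≤ d n) (hd : ∀ n, 1 ≤ n → c ≤ d n) :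
    Tendsto (fun n => N n / d n) atTop (nhds 0) := by
  have hlim : Tendsto (fun n : ℕ => (r ^ n + s ^ n) / c) atTop (nhds 0) := by
    have := ((tendsto_pow_atTop_nhds_zero_of_lt_one hr0 hr).add
      (tendsto_pow_atTop_nhds_zero_of_lt_one hs0 hs)).div_const c
    simpa using this
  refine squeeze_zero' ?_ ?_ hlim
  · filter_upwards with n
    exact div_nonneg (hN0 n) (hd0 n)
  · filter_upwards [eventually_ge_atTop 1] with n hn
    exact div_le_div₀ (by positivity) (hN n) hc (hd n hn)

lemma denom_bound (x : ℝ) (hx : |x| < 1) (n : ℕ) (hn : 1 ≤ n) :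
    1 - |x| ≤ 1 + x ^ n ∧ 1 - |x| ≤ 1 - x ^ n := by
  have h1 : |x ^ n| ≤ |x| := by
    rw [abs_pow]
    exact pow_le_of_le_one (abs_nonneg x) hx.le (by omega)
  rw [abs_le] at h1
  constructor <;> linarith

/-- If p ≠ q, or p = q and φ ∉ {0, π}, then a_n → 0 and b_n → 0. -/
theorem overlaps_tendsto_zero (p q φ : ℝ) (hp : p ∈ Set.Ioo (0 : ℝ) 1)
    (hq : q ∈ Set.Ioo (0 : ℝ) 1) (hφ : φ ∈ Set.Ico (0 : ℝ) (2 * Real.pi))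
    (h : p ≠ q ∨ (p = q ∧ φ ≠ 0 ∧ φ ≠ Real.pi)) :
    Tendsto (aSeq p q φ) atTop (nhds 0) ∧ Tendsto (bSeq p q φ) atTop (nhds 0) := by
  obtain ⟨hp0, hp1⟩ := hp
  obtain ⟨hq0, hq1⟩ := hq
  set e : ℂ := Complex.exp (-(Complex.I * φ)) with he_def
  set w : ℂ := (Real.sqrt (p * q) : ℂ) + e * (Real.sqrt ((1 - p) * (1 - q)) : ℂ) with hw_def
  set v : ℂ := (Real.sqrt (p * q) : ℂ) - e * (Real.sqrt ((1 - p) * (1 - q)) : ℂ) with hv_def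
  have he1 : ‖e‖ = 1 := by
    rw [he_def, Complex.norm_exp]
    simp [Complex.mul_re]
  -- the key fact : both moduli < 1
  have hkey : ‖w‖ < 1 ∧ ‖v‖ < 1 := by
    rcases h with hpq | ⟨rfl, hφ0, hφπ⟩
    · -- p ≠ q case
      have hμ : Real.sqrt (p * q) + Real.sqrt ((1 - p) * (1 - q)) < 1 := by
        set x := Real.sqrt (p * (1 - q)) with hx_def
        set y := Real.sqrt (q * (1 - p)) with hy_def
        have hx2 : x ^ 2 = p * (1 - q) := Real.sq_sqrt (by nlinarith)
        have hy2 : y ^ 2 = q * (1 - p) := Real.sq_sqrt (by nlinarith)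
        have hμ1 : Real.sqrt (p * q) ^ 2 = p * q := Real.sq_sqrt (by nlinarith)
        have hμ2 : Real.sqrt ((1 - p) * (1 - q)) ^ 2 = (1 - p) * (1 - q) :=
          Real.sq_sqrt (by nlinarith)
        have hxy : Real.sqrt (p * q) * Real.sqrt ((1 - p) * (1 - q)) = x * y := by
          rw [hx_def, hy_def, ← Real.sqrt_mul (by nlinarith), ← Real.sqrt_mul (by nlinarith)]
          congr 1; ring
        have hxyne : x ≠ y := by
          intro hxy'
          apply hpq
          have : x ^ 2 = y ^ 2 := by rw [hxy']
          rw [hx2, hy2] at this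
          nlinarith
        have hsq : (x - y) ^ 2 > 0 := by
          have := sub_ne_zero.mpr hxyne; positivity
        nlinarith [Real.sqrt_nonneg (p * q), Real.sqrt_nonneg ((1 - p) * (1 - q))]
      have hwb : ‖w‖ ≤ Real.sqrt (p * q) + Real.sqrt ((1 - p) * (1 - q)) := by
        calc ‖w‖ ≤ ‖(Real.sqrt (p * q) : ℂ)‖ +
            ‖e * (Real.sqrt ((1 - p) * (1 - q)) : ℂ)‖ := norm_add_le _ _
          _ = Real.sqrt (p * q) + Real.sqrt ((1 - p) * (1 - q)) := by
            rw [norm_mul, he1, Complex.norm_real, Complex.norm_real, Real.norm_eq_abs, Real.norm_eq_abs, one_mul,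
              abs_of_nonneg (Real.sqrt_nonneg _), abs_of_nonneg (Real.sqrt_nonneg _)]
      have hvb : ‖v‖ ≤ Real.sqrt (p * q) + Real.sqrt ((1 - p) * (1 - q)) := by
        calc ‖v‖ ≤ ‖(Real.sqrt (p * q) : ℂ)‖ +
            ‖e * (Real.sqrt ((1 - p) * (1 - q)) : ℂ)‖ := by
              rw [hv_def]
              exact norm_sub_le _ _
          _ = Real.sqrt (p * q) + Real.sqrt ((1 - p) * (1 - q)) := by
            rw [norm_mul, he1, Complex.norm_real, Complex.norm_real, Real.norm_eq_abs, Real.norm_eq_abs, one_mul,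
              abs_of_nonneg (Real.sqrt_nonneg _), abs_of_nonneg (Real.sqrt_nonneg _)]
      exact ⟨lt_of_le_of_lt hwb hμ, lt_of_le_of_lt hvb hμ⟩
    · -- p = q, φ ≠ 0, π case
      have hμ1 : Real.sqrt (p * p) = p := Real.sqrt_mul_self hp0.le
      have hμ2 : Real.sqrt ((1 - p) * (1 - p)) = 1 - p := Real.sqrt_mul_self (by linarith)
      have hcos1 : Real.cos φ < 1 := by
        rcases lt_or_eq_of_le (Real.cos_le_one φ) with h' | h'
        · exact h'
        · exfalso
          exact hφ0 ((Real.cos_eq_one_iff_of_lt_of_lt (by linarith [hφ.1, Real.pi_pos])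
            hφ.2).mp h')
      have hcosm1 : -1 < Real.cos φ := by
        rcases lt_or_eq_of_le (Real.neg_one_le_cos φ) with h' | h'
        · exact h'
        · exfalso
          apply hφπ
          have hc : Real.cos (φ - Real.pi) = 1 := by
            rw [Real.cos_sub]; simp [← h']
          have := (Real.cos_eq_one_iff_of_lt_of_lt (x := φ - Real.pi)
            (by linarith [hφ.1, Real.pi_pos]) (by linarith [hφ.2, Real.pi_pos])).mp hc
          linarith
      have he : e = ((Real.cos φ : ℝ) : ℂ) - ((Real.sin φ : ℝ) : ℂ) * Complex.I := by
        rw [he_def, show -(Complex.I * (φ : ℂ)) = ((-φ : ℝ) : ℂ) * Complex.I by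
          push_cast; ring, Complex.exp_mul_I]
        push_cast
        rw [Complex.cos_neg, Complex.sin_neg, ← Complex.ofReal_cos, ← Complex.ofReal_sin]
        ring
      have hpp : 0 < p * (1 - p) := by nlinarith
      have hsc : Real.sin φ ^ 2 + Real.cos φ ^ 2 = 1 := Real.sin_sq_add_cos_sq φ
      constructor
      · have hsq : ‖w‖ ^ 2 < 1 := by
          rw [Complex.sq_norm, hw_def, hμ1, hμ2, he]
          rw [Complex.normSq_apply]
          simp [Complex.add_re, Complex.add_im, Complex.mul_re, Complex.mul_im,
            Complex.cos_ofReal_re, Complex.sin_ofReal_re]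
          nlinarith [hsc, sq_nonneg (1 - p),
            mul_pos hpp (show (0:ℝ) < 1 - Real.cos φ by linarith)]
        nlinarith [norm_nonneg w]
      · have hsq : ‖v‖ ^ 2 < 1 := by
          rw [Complex.sq_norm, hv_def, hμ1, hμ2, he]
          rw [Complex.normSq_apply]
          simp [Complex.sub_re, Complex.sub_im, Complex.mul_re, Complex.mul_im,
            Complex.cos_ofReal_re, Complex.sin_ofReal_re]
          nlinarith [hsc, sq_nonneg (1 - p),
            mul_pos hpp (show (0:ℝ) < 1 + Real.cos φ by linarith)]
        nlinarith [norm_nonneg v]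
  obtain ⟨hw1, hv1⟩ := hkey
  -- denominator bound
  have hxp : |2 * p - 1| < 1 := by rw [abs_lt]; constructor <;> linarith
  have hxq : |2 * q - 1| < 1 := by rw [abs_lt]; constructor <;> linarith
  set c : ℝ := Real.sqrt ((1 - |2 * p - 1|) * (1 - |2 * q - 1|)) with hc_def
  have hc : 0 < c := Real.sqrt_pos.mpr (by nlinarith)
  have hda : ∀ n, 1 ≤ n → c ≤ Real.sqrt ((1 + (2 * p - 1) ^ n) * (1 + (2 * q - 1) ^ n)) := by
    intro n hn
    apply Real.sqrt_le_sqrt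
    have h1 := denom_bound _ hxp n hn
    have h2 := denom_bound _ hxq n hn
    have := abs_nonneg (2 * p - 1); have := abs_nonneg (2 * q - 1)
    nlinarith
  have hdb : ∀ n, 1 ≤ n → c ≤ Real.sqrt ((1 - (2 * p - 1) ^ n) * (1 - (2 * q - 1) ^ n)) := by
    intro n hn
    apply Real.sqrt_le_sqrt
    have h1 := denom_bound _ hxp n hn
    have h2 := denom_bound _ hxq n hn
    have := abs_nonneg (2 * p - 1); have := abs_nonneg (2 * q - 1)
    nlinarith
  constructor
  · apply aux_tendsto (‖w‖) (‖v‖) (norm_nonneg w) hw1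
      (norm_nonneg v) hv1 _ _ (fun n => norm_nonneg _) _ c hc
      (fun n => Real.sqrt_nonneg _) hda
    intro n
    calc ‖w ^ n + v ^ n‖ ≤ ‖w ^ n‖ + ‖v ^ n‖ :=
        norm_add_le _ _
      _ = ‖w‖ ^ n + ‖v‖ ^ n := by rw [norm_pow, norm_pow]
  · apply aux_tendsto (‖w‖) (‖v‖) (norm_nonneg w) hw1
      (norm_nonneg v) hv1 _ _ (fun n => norm_nonneg _) _ c hc
      (fun n => Real.sqrt_nonneg _) hdb
    intro n
    calc ‖w ^ n - v ^ n‖ ≤ ‖w ^ n‖ + ‖v ^ n‖ :=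
        norm_sub_le _ _
      _ = ‖w‖ ^ n + ‖v‖ ^ n := by rw [norm_pow, norm_pow]
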